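/- In ℝ², let ξ be nonzero and ξ⊥ its 90-degree rotation. Let f be a symmetric m-multilinear form on ℝ². If f(ξ⊥,…,ξ⊥) · f(w₁,…,w_m) = 0 for all choices of w_i ∈ {ξ, ξ⊥} (ellipticity pairing with the symbol ξ⊥⊗⋯⊗ξ⊥), and f contracted with ξ in any one slot vanishes (solenoidal condition on the symbol level), then f(w₁,…,w_m) = 0 for every w₁,…,w_m ∈ ℝ², hence f = 0. -/
import Mathlib


/-- Ellipticity of the principal symbol on solenoidal tensors: in ℝ² with
`ξ ≠ 0` and `ξ⊥` its 90° rotation, if a symmetric `m`-multilinear form `f`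
satisfies `f(ξ⊥,…,ξ⊥) ⬝ f(w₁,…,w_m) = 0` for all choices `wᵢ ∈ {ξ, ξ⊥}` and the
solenoidal condition (contraction with `ξ` in one slot vanishes), then
`f(w₁,…,w_m) = 0` for all `w`, i.e. `f = 0`. -/
theorem symbol_elliptic_on_solenoidal (m : ℕ) (hm : 1 ≤ m)
    (f : MultilinearMap ℝ (fun _ : Fin m => ℝ × ℝ) ℝ)
    (hsym : ∀ (σ : Equiv.Perm (Fin m)) (v : Fin m → ℝ × ℝ), f (v ∘ σ) = f v)
    (ξ : ℝ × ℝ) (hξ : ξ ≠ 0)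
    (hpair : ∀ w : Fin m → ℝ × ℝ,
      (∀ i, w i = ξ ∨ w i = ((-ξ.2, ξ.1) : ℝ × ℝ)) →
      f (fun _ => ((-ξ.2, ξ.1) : ℝ × ℝ)) * f w = 0)
    (hsol : ∀ v : Fin m → ℝ × ℝ,
      f (Function.update v ⟨m - 1, by omega⟩ ξ) = 0) :
    (∀ w : Fin m → ℝ × ℝ, f w = 0) ∧ f = 0 := by
  classical
  have hlast : ∀ v : Fin m → ℝ × ℝ, v ⟨m - 1, by omega⟩ = ξ → f v = 0 := by
    intro v hv
    have h := hsol v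
    rwa [← hv, Function.update_eq_self] at h
  have h0 : f (fun _ => ((-ξ.2, ξ.1) : ℝ × ℝ)) = 0 := by
    have := hpair (fun _ => ((-ξ.2, ξ.1) : ℝ × ℝ)) (fun i => Or.inr rfl)
    exact mul_self_eq_zero.mp this
  have hbasis : ∀ w : Fin m → ℝ × ℝ,
      (∀ i, w i = ξ ∨ w i = ((-ξ.2, ξ.1) : ℝ × ℝ)) → f w = 0 := by
    intro w hw
    by_cases h : ∃ i, w i = ξ
    · obtain ⟨i, hi⟩ := h
      have hs := hsym (Equiv.swap i ⟨m - 1, by omega⟩) w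
      rw [← hs]
      apply hlast
      simp [Function.comp, Equiv.swap_apply_right, hi]
    · have hall : ∀ i, w i = ((-ξ.2, ξ.1) : ℝ × ℝ) := by
        intro i
        rcases hw i with h1 | h1
        · exact absurd ⟨i, h1⟩ h
        · exact h1
      rw [show w = fun _ => ((-ξ.2, ξ.1) : ℝ × ℝ) from funext hall]
      exact h0
  have key : ∀ w : Fin m → ℝ × ℝ, f w = 0 := by
    intro w
    set n : ℝ := ξ.1 ^ 2 + ξ.2 ^ 2 with hn
    have hn0 : n ≠ 0 := by
      intro h
      apply hξ
      have h1 : ξ.1 = 0 := by nlinarith [sq_nonneg ξ.1, sq_nonneg ξ.2]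
      have h2 : ξ.2 = 0 := by nlinarith [sq_nonneg ξ.1, sq_nonneg ξ.2]
      exact Prod.ext h1 h2
    set a : Fin m → ℝ := fun i => ((w i).1 * ξ.1 + (w i).2 * ξ.2) / n with ha
    set b : Fin m → ℝ := fun i => (-(w i).1 * ξ.2 + (w i).2 * ξ.1) / n with hb
    have hw : w = (fun i => a i • ξ) + (fun i => b i • ((-ξ.2, ξ.1) : ℝ × ℝ)) := by
      funext i
      have : (w i).1 = a i * ξ.1 + b i * (-ξ.2) ∧ (w i).2 = a i * ξ.2 + b i * ξ.1 := by
        constructor <;> (rw [ha, hb]; field_simp; ring)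
      ext
      · simpa using this.1
      · simpa using this.2
    rw [hw, f.map_add_univ]
    apply Finset.sum_eq_zero
    intro s _
    have hpw : (s.piecewise (fun i => a i • ξ)
          (fun i => b i • ((-ξ.2, ξ.1) : ℝ × ℝ)))
        = fun i => (if i ∈ s then a i else b i) •
            (if i ∈ s then ξ else ((-ξ.2, ξ.1) : ℝ × ℝ)) := by
      funext i
      by_cases h : i ∈ s <;> simp [Finset.piecewise, h]
    rw [hpw, f.map_smul_univ,
      hbasis (fun i => if i ∈ s then ξ else ((-ξ.2, ξ.1) : ℝ × ℝ))
        (fun i => by by_cases h : i ∈ s <;> simp [h]), smul_zero]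
  exact ⟨key, MultilinearMap.ext fun v => key v⟩
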